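/- Let S be a subset of the positive reals (0, ∞) satisfying: (1) for all a, b ∈ S with a > b, the number a − ⌊a/b⌋·b belongs to S ∪ {0}; and (2) there exist a, b ∈ S with a/b irrational. Then 0 is a limit point of S, i.e. for every ε > 0 there exists s ∈ S with 0 < s < ε. -/

import Mathlib

theorem stmt_19 (S : Set ℝ) (hS : S ⊆ Set.Ioi 0)
    (h1 : ∀ a ∈ S, ∀ b ∈ S, b < a → a - ⌊a / b⌋ * b ∈ S ∪ {0})
    (h2 : ∃ a ∈ S, ∃ b ∈ S, Irrational (a / b)) :
    ∀ ε > 0, ∃ s ∈ S, 0 < s ∧ s < ε := by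
  -- one Euclidean step
  have step : ∀ a ∈ S, ∀ b ∈ S, b < a → Irrational (a / b) →
      ∃ r ∈ S, 0 < r ∧ r < b ∧ r ≤ a - b ∧ Irrational (b / r) := by
    intro a ha b hb hba hirr
    have hb0 : (0:ℝ) < b := hS hb
    have hfr : a - (⌊a / b⌋ : ℝ) * b = b * Int.fract (a / b) := by
      rw [Int.fract]
      field_simp
    have hfrac_irr : Irrational (Int.fract (a / b)) := by
      rw [Int.fract]
      exact Irrational.sub_intCast hirr _
    have hfr_pos : 0 < Int.fract (a / b) :=
      lt_of_le_of_ne (Int.fract_nonneg _) (fun h => hfrac_irr.ne_zero h.symm)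
    have hr0 : 0 < a - (⌊a / b⌋ : ℝ) * b := by
      rw [hfr]; positivity
    have hrS : a - (⌊a / b⌋ : ℝ) * b ∈ S := by
      rcases h1 a ha b hb hba with h | h
      · exact h
      · simp only [Set.mem_singleton_iff] at h
        rw [h] at hr0; exact absurd hr0 (lt_irrefl 0)
    refine ⟨_, hrS, hr0, ?_, ?_, ?_⟩
    · rw [hfr]
      calc b * Int.fract (a / b) < b * 1 := by
            exact mul_lt_mul_of_pos_left (Int.fract_lt_one _) hb0
        _ = b := mul_one b
    · have hq : (1:ℤ) ≤ ⌊a / b⌋ := by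
        rw [Int.le_floor]
        push_cast
        exact (one_le_div hb0).mpr hba.le
      have hq' : (1:ℝ) ≤ (⌊a / b⌋ : ℝ) := by exact_mod_cast hq
      have : b ≤ (⌊a / b⌋ : ℝ) * b := by nlinarith
      linarith
    · have h1' : Irrational ((a - (⌊a / b⌋ : ℝ) * b) / b) := by
        rw [hfr, mul_div_cancel_left₀ _ hb0.ne']
        exact hfrac_irr
      have := h1'.inv
      rwa [inv_div] at this
  -- main induction: halving
  have key : ∀ n : ℕ, ∀ a ∈ S, ∀ b ∈ S, b < a → Irrational (a / b) →
      ∃ s ∈ S, 0 < s ∧ s < b / 2 ^ n := by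
    intro n
    induction n with
    | zero =>
      intro a ha b hb hba hirr
      obtain ⟨r, hrS, hr0, hrb, -, -⟩ := step a ha b hb hba hirr
      exact ⟨r, hrS, hr0, by simpa using hrb⟩
    | succ n ih =>
      intro a ha b hb hba hirr
      obtain ⟨r, hrS, hr0, hrb, -, hirr1⟩ := step a ha b hb hba hirr
      obtain ⟨r2, hr2S, hr20, hr2r, hr2le, hirr2⟩ := step b hb r hrS hrb hirr1
      obtain ⟨s, hsS, hs0, hslt⟩ := ih r hrS r2 hr2S hr2r hirr2
      refine ⟨s, hsS, hs0, ?_⟩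
      have hr2half : r2 < b / 2 := by linarith
      calc s < r2 / 2 ^ n := hslt
        _ < (b / 2) / 2 ^ n := by gcongr
        _ = b / 2 ^ (n + 1) := by ring
  intro ε hε
  obtain ⟨a, ha, b, hb, hirr⟩ := h2
  have hab : a ≠ b := by
    rintro rfl
    exact hirr ⟨1, by rw [Rat.cast_one, div_self (hS ha).ne']⟩
  -- get an ordered pair with irrational ratio
  obtain ⟨a', ha', b', hb', hba', hirr'⟩ :
      ∃ a' ∈ S, ∃ b' ∈ S, b' < a' ∧ Irrational (a' / b') := by
    rcases lt_or_gt_of_ne hab with h | h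
    · refine ⟨b, hb, a, ha, h, ?_⟩
      have := hirr.inv
      rwa [inv_div] at this
    · exact ⟨a, ha, b, hb, h, hirr⟩
  obtain ⟨n, hn⟩ := pow_unbounded_of_one_lt (b' / ε) (by norm_num : (1:ℝ) < 2)
  obtain ⟨s, hsS, hs0, hslt⟩ := key n a' ha' b' hb' hba' hirr'
  refine ⟨s, hsS, hs0, ?_⟩
  have h2n : (0:ℝ) < 2 ^ n := by positivity
  have : b' / 2 ^ n < ε := by
    rw [div_lt_iff₀ h2n]
    rw [div_lt_iff₀ hε] at hn
    linarith
  linarith
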